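/- Let γ be an affine line in ℝ² that contains infinitely many points of the integer lattice ℤ² and does not contain the origin. Let (K_n)_{n} be a collection of subgroups of ℤ² whose union K contains all but finitely many of the lattice points lying on γ, and suppose there exists a lattice point on γ that does not belong to K. Then the collection {K_n} contains infinitely many distinct subgroups. -/

import Mathlib

/-- A set of integers closed under `(k₁, k₂, k₃) ↦ k₁ + k₂ - k₃`. -/
def DGClosed (S : Set ℤ) : Prop :=
  ∀ k₁ k₂ k₃, k₁ ∈ S → k₂ ∈ S → k₃ ∈ S → k₁ + k₂ - k₃ ∈ S

/-- `S` contains two distinct elements. -/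
def DGNondeg (S : Set ℤ) : Prop :=
  ∃ pr : ℤ × ℤ, pr.1 ∈ S ∧ pr.2 ∈ S ∧ pr.1 ≠ pr.2

open Classical in
/-- A nonzero "period" for `S`: the difference of two distinct elements if they exist. -/
noncomputable def dgd (S : Set ℤ) : ℤ :=
  if h : DGNondeg S then h.choose.1 - h.choose.2 else 1

lemma dgd_ne_zero (S : Set ℤ) : dgd S ≠ 0 := by
  by_cases h : DGNondeg S
  · unfold dgd; rw [dif_pos h]
    exact sub_ne_zero.mpr h.choose_spec.2.2
  · unfold dgd; rw [dif_neg h]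
    exact one_ne_zero

lemma dgd_sub_mem (S : Set ℤ) (hS : DGClosed S) (hnd : DGNondeg S)
    (m k : ℤ) (hk : k ∈ S) : k - m * dgd S ∈ S := by
  obtain ⟨h1, h2, -⟩ := hnd.choose_spec
  have hde : dgd S = hnd.choose.1 - hnd.choose.2 := by unfold dgd; rw [dif_pos hnd]
  have hplus : ∀ x ∈ S, x + dgd S ∈ S := by
    intro x hx
    have := hS x hnd.choose.1 hnd.choose.2 hx h1 h2
    have hx' : x + dgd S = x + hnd.choose.1 - hnd.choose.2 := by rw [hde]; ring
    rwa [hx']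
  have hminus : ∀ x ∈ S, x - dgd S ∈ S := by
    intro x hx
    have := hS x hnd.choose.2 hnd.choose.1 hx h2 h1
    have hx' : x - dgd S = x + hnd.choose.2 - hnd.choose.1 := by rw [hde]; ring
    rwa [hx']
  induction m using Int.induction_on with
  | zero => simpa using hk
  | succ n ih =>
      have h := hminus _ ih
      have e : k - ((n : ℤ) + 1) * dgd S = k - (n : ℤ) * dgd S - dgd S := by ring
      rwa [e]
  | pred n ih =>
      have h := hplus _ ih
      have e : k - (-(n : ℤ) - 1) * dgd S = k - (-(n : ℤ)) * dgd S + dgd S := by ring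
      rwa [e]

/-- Parametrization of the lattice points of an affine line with infinitely many
lattice points. -/
lemma dg_line_param (p q : ℝ × ℝ)
    (V : Set (ℤ × ℤ))
    (hV : V = {v : ℤ × ℤ | ∃ t : ℝ, ((v.1 : ℝ), (v.2 : ℝ)) = p + t • q})
    (hinf : V.Infinite) :
    ∃ a w : ℤ × ℤ, w ≠ 0 ∧ (∀ k : ℤ, a + k • w ∈ V) ∧
      (∀ v ∈ V, ∃ k : ℤ, v = a + k • w) := by
  obtain ⟨a, ha⟩ := hinf.nonempty
  obtain ⟨b, hb⟩ := (hinf.diff (Set.finite_singleton a)).nonempty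
  have hab : b ≠ a := by simpa using hb.2
  have hbV : b ∈ V := hb.1
  subst hV
  obtain ⟨ta, hta⟩ := ha
  obtain ⟨tb, htb⟩ := hbV
  have hq1 : (a.1 : ℝ) = p.1 + ta * q.1 := by
    have := congrArg Prod.fst hta; simpa using this
  have hq2 : (a.2 : ℝ) = p.2 + ta * q.2 := by
    have := congrArg Prod.snd hta; simpa using this
  have hr1 : (b.1 : ℝ) = p.1 + tb * q.1 := by
    have := congrArg Prod.fst htb; simpa using this
  have hr2 : (b.2 : ℝ) = p.2 + tb * q.2 := by
    have := congrArg Prod.snd htb; simpa using this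
  -- direction vector
  have hba : b - a ≠ 0 := sub_ne_zero.mpr hab
  have hba' : (b - a).1 ≠ 0 ∨ (b - a).2 ≠ 0 := by
    by_contra h
    push_neg at h
    exact hba (Prod.ext h.1 h.2)
  set g : ℕ := Int.gcd (b.1 - a.1) (b.2 - a.2) with hgdef
  have hgpos : 0 < g := by
    rw [hgdef, Int.gcd_pos_iff]
    simpa using hba'
  have hg0 : (g : ℤ) ≠ 0 := by exact_mod_cast hgpos.ne'
  have hg0r : (g : ℝ) ≠ 0 := by exact_mod_cast hgpos.ne'
  set w : ℤ × ℤ := ((b.1 - a.1) / (g : ℤ), (b.2 - a.2) / (g : ℤ)) with hwdef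
  have hgw1 : (g : ℤ) * w.1 = b.1 - a.1 :=
    Int.mul_ediv_cancel' (Int.gcd_dvd_left _ _)
  have hgw2 : (g : ℤ) * w.2 = b.2 - a.2 :=
    Int.mul_ediv_cancel' (Int.gcd_dvd_right _ _)
  have hcop : Int.gcd w.1 w.2 = 1 := Int.gcd_div_gcd_div_gcd hgpos
  obtain ⟨c, d, hbez⟩ := Int.isCoprime_iff_gcd_eq_one.mpr hcop
  have hwne : w ≠ 0 := by
    intro h
    rw [h] at hbez
    simp at hbez
  -- real versions
  have hgw1r : (g : ℝ) * (w.1 : ℝ) = (tb - ta) * q.1 := by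
    have : ((g : ℤ) * w.1 : ℝ) = ((b.1 - a.1 : ℤ) : ℝ) := by exact_mod_cast congrArg (fun z : ℤ => (z : ℝ)) hgw1
    push_cast at this
    rw [this]
    linear_combination hr1 - hq1
  have hgw2r : (g : ℝ) * (w.2 : ℝ) = (tb - ta) * q.2 := by
    have : ((g : ℤ) * w.2 : ℝ) = ((b.2 - a.2 : ℤ) : ℝ) := by exact_mod_cast congrArg (fun z : ℤ => (z : ℝ)) hgw2
    push_cast at this
    rw [this]
    linear_combination hr2 - hq2
  refine ⟨a, w, hwne, ?_, ?_⟩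
  · -- every a + k • w is a lattice point of the line
    intro k
    refine ⟨ta + k * ((tb - ta) / (g : ℝ)), ?_⟩
    have hgt : (g : ℝ) * (ta + k * ((tb - ta) / (g : ℝ)))
        = (g : ℝ) * ta + k * (tb - ta) := by
      field_simp
    have hc1 : ((a + k • w).1 : ℝ) = (a.1 : ℝ) + (k : ℝ) * (w.1 : ℝ) := by
      push_cast [Prod.fst_add, Prod.smul_fst, smul_eq_mul]
      ring
    have hc2 : ((a + k • w).2 : ℝ) = (a.2 : ℝ) + (k : ℝ) * (w.2 : ℝ) := by
      push_cast [Prod.snd_add, Prod.smul_snd, smul_eq_mul]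
      ring
    have e1 : (g : ℝ) * ((a.1 : ℝ) + (k : ℝ) * (w.1 : ℝ))
        = (g : ℝ) * (p.1 + (ta + k * ((tb - ta) / (g : ℝ))) * q.1) := by
      linear_combination (g : ℝ) * hq1 + (k : ℝ) * hgw1r - q.1 * hgt
    have e2 : (g : ℝ) * ((a.2 : ℝ) + (k : ℝ) * (w.2 : ℝ))
        = (g : ℝ) * (p.2 + (ta + k * ((tb - ta) / (g : ℝ))) * q.2) := by
      linear_combination (g : ℝ) * hq2 + (k : ℝ) * hgw2r - q.2 * hgt
    have e1' := mul_left_cancel₀ hg0r e1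
    have e2' := mul_left_cancel₀ hg0r e2
    refine Prod.ext ?_ ?_
    · simpa [hc1] using e1'
    · simpa [hc2] using e2'
  · -- every lattice point of the line is a + k • w
    intro v hv
    obtain ⟨t, ht⟩ := hv
    have hv1 : (v.1 : ℝ) = p.1 + t * q.1 := by
      have := congrArg Prod.fst ht; simpa using this
    have hv2 : (v.2 : ℝ) = p.2 + t * q.2 := by
      have := congrArg Prod.snd ht; simpa using this
    -- cross product relation over ℝ, then over ℤ
    have hcr : (g : ℝ) * (((v.1 : ℝ) - a.1) * w.2) = (g : ℝ) * (((v.2 : ℝ) - a.2) * w.1) := by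
      linear_combination ((v.1 : ℝ) - a.1) * hgw2r - ((v.2 : ℝ) - a.2) * hgw1r
        + (tb - ta) * q.2 * (hv1 - hq1) - (tb - ta) * q.1 * (hv2 - hq2)
    have hcr' := mul_left_cancel₀ hg0r hcr
    have hc : (v.1 - a.1) * w.2 = (v.2 - a.2) * w.1 := by exact_mod_cast hcr'
    refine ⟨c * (v.1 - a.1) + d * (v.2 - a.2), ?_⟩
    refine Prod.ext ?_ ?_
    · have : v.1 = a.1 + (c * (v.1 - a.1) + d * (v.2 - a.2)) * w.1 := by
        linear_combination d * hc - (v.1 - a.1) * hbez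
      simpa [Prod.fst_add, Prod.smul_fst, smul_eq_mul] using this
    · have : v.2 = a.2 + (c * (v.1 - a.1) + d * (v.2 - a.2)) * w.2 := by
        linear_combination (-c) * hc - (v.2 - a.2) * hbez
      simpa [Prod.snd_add, Prod.smul_snd, smul_eq_mul] using this

/-- Lemma 2 of Dunfield–Garoufalidis: if an affine line `γ` in `ℝ²` contains infinitely
many lattice points, does not pass through the origin, the union of a collection of
subgroups `K n` of `ℤ²` contains all but finitely many lattice points of `γ`, and some
lattice point of `γ` lies in none of the `K n`, then there are infinitely many distinct
subgroups among the `K n`. -/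
theorem stmt_0 {ι : Type*} (p q : ℝ × ℝ) (hq : q ≠ 0)
    (γ : Set (ℝ × ℝ)) (hγ : γ = {x : ℝ × ℝ | ∃ t : ℝ, x = p + t • q})
    (h0 : (0 : ℝ × ℝ) ∉ γ)
    (K : ι → AddSubgroup (ℤ × ℤ))
    (hinf : {v : ℤ × ℤ | ((v.1 : ℝ), (v.2 : ℝ)) ∈ γ}.Infinite)
    (hcofin : {v : ℤ × ℤ | ((v.1 : ℝ), (v.2 : ℝ)) ∈ γ ∧ ∀ n, v ∉ K n}.Finite)
    (hex : ∃ v : ℤ × ℤ, ((v.1 : ℝ), (v.2 : ℝ)) ∈ γ ∧ ∀ n, v ∉ K n) :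
    (Set.range K).Infinite := by
  by_contra hfin'
  rw [Set.not_infinite] at hfin'
  -- parametrize the lattice points of γ
  have hVeq : {v : ℤ × ℤ | ((v.1 : ℝ), (v.2 : ℝ)) ∈ γ}
      = {v : ℤ × ℤ | ∃ t : ℝ, ((v.1 : ℝ), (v.2 : ℝ)) = p + t • q} := by
    rw [hγ]; rfl
  obtain ⟨a, w, hw, hline, hparam⟩ :=
    dg_line_param p q {v : ℤ × ℤ | ((v.1 : ℝ), (v.2 : ℝ)) ∈ γ} hVeq hinf
  obtain ⟨v₀, hv₀γ, hv₀K⟩ := hex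
  obtain ⟨k₀, hk₀⟩ := hparam v₀ hv₀γ
  -- the parametrizing map is injective
  have hfinj : Function.Injective (fun k : ℤ => a + k • w) := by
    intro k k' h
    have h' : (k - k') • w = 0 := by
      rw [sub_smul, sub_eq_zero]
      exact add_left_cancel h
    rcases smul_eq_zero.mp h' with h'' | h''
    · exact sub_eq_zero.mp h''
    · exact absurd h'' hw
  -- the trace of each subgroup on the line
  set S : AddSubgroup (ℤ × ℤ) → Set ℤ := fun H => {k : ℤ | a + k • w ∈ H} with hSdef
  have hSclosed : ∀ H, DGClosed (S H) := by
    intro H k₁ k₂ k₃ h1 h2 h3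
    have e : a + (k₁ + k₂ - k₃) • w = (a + k₁ • w) + (a + k₂ • w) - (a + k₃ • w) := by
      rw [sub_smul, add_smul]; abel
    show a + (k₁ + k₂ - k₃) • w ∈ H
    rw [e]
    exact H.sub_mem (H.add_mem h1 h2) h3
  set F := hfin'.toFinset with hFdef
  set D : ℤ := ∏ H ∈ F, dgd (S H) with hDdef
  have hD0 : D ≠ 0 := Finset.prod_ne_zero_iff.mpr fun H _ => dgd_ne_zero _
  have hdvd : ∀ H ∈ F, dgd (S H) ∣ D := fun H hH => Finset.dvd_prod_of_mem _ hH
  -- the set of "bad" parameters is finite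
  have hψinj : Function.Injective (fun j : ℤ => a + (k₀ + j * D) • w) := by
    intro j j' h
    have := hfinj h
    have h2 : j * D = j' * D := by omega
    exact mul_right_cancel₀ hD0 h2
  have hJ1 : {j : ℤ | (((a + (k₀ + j * D) • w).1 : ℝ), ((a + (k₀ + j * D) • w).2 : ℝ)) ∈ γ
      ∧ ∀ n, a + (k₀ + j * D) • w ∉ K n}.Finite := by
    have : {j : ℤ | (((a + (k₀ + j * D) • w).1 : ℝ), ((a + (k₀ + j * D) • w).2 : ℝ)) ∈ γ
        ∧ ∀ n, a + (k₀ + j * D) • w ∉ K n}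
        = (fun j : ℤ => a + (k₀ + j * D) • w) ⁻¹'
          {v : ℤ × ℤ | ((v.1 : ℝ), (v.2 : ℝ)) ∈ γ ∧ ∀ n, v ∉ K n} := rfl
    rw [this]
    exact hcofin.preimage hψinj.injOn
  have hJ2 : (⋃ H ∈ F, {j : ℤ | k₀ + j * D ∈ S H ∧ ¬ DGNondeg (S H)}).Finite := by
    refine Set.Finite.biUnion F.finite_toSet fun H _ => Set.Subsingleton.finite ?_
    intro j hj j' hj'
    by_contra hne
    refine hj.2 ⟨(k₀ + j * D, k₀ + j' * D), hj.1, hj'.1, ?_⟩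
    simp only [ne_eq]
    intro h
    exact hne (mul_right_cancel₀ hD0 (by omega))
  -- pick a good parameter
  obtain ⟨j, hj⟩ := ((hJ1.union hJ2).infinite_compl).nonempty
  rw [Set.mem_compl_iff, Set.mem_union] at hj
  push_neg at hj
  obtain ⟨hj1, hj2⟩ := hj
  have hmem' : (((a + (k₀ + j * D) • w).1 : ℝ), ((a + (k₀ + j * D) • w).2 : ℝ)) ∈ γ :=
    hline (k₀ + j * D)
  have hex' : ∃ n, a + (k₀ + j * D) • w ∈ K n := by
    by_contra hno
    push_neg at hno
    exact hj1 ⟨hmem', hno⟩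
  obtain ⟨n, hn⟩ := hex'
  have hHF : K n ∈ F := hfin'.mem_toFinset.mpr ⟨n, rfl⟩
  have hSmem : k₀ + j * D ∈ S (K n) := hn
  by_cases hnd : DGNondeg (S (K n))
  · obtain ⟨e, he⟩ := hdvd (K n) hHF
    have hsub := dgd_sub_mem (S (K n)) (hSclosed (K n)) hnd (j * e) _ hSmem
    have heq : k₀ + j * D - j * e * dgd (S (K n)) = k₀ := by rw [he]; ring
    rw [heq] at hsub
    have : v₀ ∈ K n := by rw [hk₀]; exact hsub
    exact hv₀K n this
  · exact hj2 (Set.mem_biUnion hHF ⟨hSmem, hnd⟩)
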